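/- Let E : ℝ^{n+2} → ℝ be C¹ and let y, u : ℝ × (−ε₀, ε₀) → ℝ be smooth families satisfying E(y, y', …, y^{(n)}, u)(t, ε) = 0 identically (derivatives in t). Let δy^{(ι)}(t) = ∂/∂ε|_{ε=0} of ∂^ι y/∂t^ι and δu(t) = ∂u/∂ε(t, 0). Suppose at ε = 0 the index ν ∈ {1,…,n} is minimal with ∂E/∂y^{(ν)} ≠ 0 along the trajectory. Then d^ν/dt^ν (δy) = 𝔉 + 𝔞·δu, where 𝔉 = −Σ_{ι ≠ ν} (∂E/∂y^{(ι)} / ∂E/∂y^{(ν)})·δy^{(ι)} and 𝔞 = −(∂E/∂u)/(∂E/∂y^{(ν)}), all partial derivatives evaluated along the reference trajectory. -/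

import Mathlib

/-- Derivation of the monovariable homeostat: differentiating the implicit
input–output relation `E(y, ẏ, …, y⁽ⁿ⁾, u) = 0` along a one-parameter family of
trajectories at `ε = 0`. `Y i t ε` is the `i`-th time derivative `y⁽ⁱ⁾(t, ε)`,
`P ι` is `∂E/∂y⁽ᶥ⁾` and `Q` is `∂E/∂u`, evaluated along the reference
trajectory `ε = 0`. -/
theorem homeostat_derivation (n ν : ℕ) (hν1 : 1 ≤ ν) (hνn : ν ≤ n)
    (E : ((Fin (n + 1) → ℝ) × ℝ) → ℝ) (hE : ContDiff ℝ 1 E)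
    (Y : ℕ → ℝ → ℝ → ℝ) (u : ℝ → ℝ → ℝ)
    -- `Y (i+1)` is the time derivative of `Y i`:
    (hYt : ∀ i < n, ∀ t ε, HasDerivAt (fun t' => Y i t' ε) (Y (i + 1) t ε) t)
    -- the family satisfies the implicit relation identically:
    (htraj : ∀ t ε, E (fun i : Fin (n + 1) => Y (i : ℕ) t ε, u t ε) = 0)
    -- smoothness of the family in the parameter `ε`:
    (hYε : ∀ i ≤ n, ∀ t, DifferentiableAt ℝ (fun ε => Y i t ε) 0)
    (huε : ∀ t, DifferentiableAt ℝ (fun ε => u t ε) 0)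
    -- partial derivatives w.r.t. `t` and `ε` commute (smoothness):
    (hcomm : ∀ i < n, ∀ t, HasDerivAt (fun t' => deriv (fun ε => Y i t' ε) 0)
      (deriv (fun ε => Y (i + 1) t ε) 0) t)
    (P : Fin (n + 1) → ℝ → ℝ) (Q : ℝ → ℝ)
    (hP : ∀ ι t, P ι t =
      fderiv ℝ E (fun i : Fin (n + 1) => Y (i : ℕ) t 0, u t 0) (Pi.single ι 1, 0))
    (hQ : ∀ t, Q t =
      fderiv ℝ E (fun i : Fin (n + 1) => Y (i : ℕ) t 0, u t 0) (0, 1))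
    -- `ν` is minimal in `{1, …, n}` with `∂E/∂y⁽ᵛ⁾ ≠ 0` along the trajectory:
    (hmin : ∀ t, ∀ ι : Fin (n + 1), 0 < (ι : ℕ) → (ι : ℕ) < ν → P ι t = 0)
    (hPν : ∀ t, P (⟨ν, by omega⟩ : Fin (n + 1)) t ≠ 0) :
    ∀ t, iteratedDeriv ν (fun t' => deriv (fun ε => Y 0 t' ε) 0) t =
      (-∑ ι ∈ Finset.univ.erase (⟨ν, by omega⟩ : Fin (n + 1)),
          (P ι t / P (⟨ν, by omega⟩ : Fin (n + 1)) t) *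
            deriv (fun ε => Y (ι : ℕ) t ε) 0) +
        (-(Q t / P (⟨ν, by omega⟩ : Fin (n + 1)) t)) * deriv (fun ε => u t ε) 0 := by
  intro t
  set p := ((fun i : Fin (n + 1) => Y (i : ℕ) t 0, u t 0) : (Fin (n + 1) → ℝ) × ℝ) with hp
  set νf : Fin (n + 1) := ⟨ν, by omega⟩ with hνf
  -- Step 1: iterated derivative equals δY ν
  have step1 : ∀ k j, j + k ≤ n → ∀ t,
      iteratedDeriv k (fun t' => deriv (fun ε => Y j t' ε) 0) t
        = deriv (fun ε => Y (j + k) t ε) 0 := by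
    intro k
    induction k with
    | zero => intro j _ t; simp
    | succ k ih =>
      intro j hj t
      rw [iteratedDeriv_succ']
      have heq : (deriv fun t' => deriv (fun ε => Y j t' ε) 0)
          = fun t' => deriv (fun ε => Y (j + 1) t' ε) 0 := by
        funext t'
        exact (hcomm j (by omega) t').deriv
      rw [heq]
      have := ih (j + 1) (by omega) t
      rw [this]
      ring_nf
  -- Step 2: chain rule gives the linear relation
  have hpair : HasDerivAt (fun ε => ((fun i : Fin (n + 1) => Y (i : ℕ) t ε, u t ε) :
      (Fin (n + 1) → ℝ) × ℝ))
      ((fun i : Fin (n + 1) => deriv (fun ε => Y (i : ℕ) t ε) 0, deriv (fun ε => u t ε) 0)) 0 := by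
    apply HasDerivAt.prodMk
    · exact hasDerivAt_pi.2 fun i =>
        ((hYε i (by omega) t).hasDerivAt)
    · exact (huε t).hasDerivAt
  have hEd : DifferentiableAt ℝ E p :=
    (hE.differentiable one_ne_zero).differentiableAt
  have hcomp : HasDerivAt (fun ε => E (fun i : Fin (n + 1) => Y (i : ℕ) t ε, u t ε))
      (fderiv ℝ E p ((fun i : Fin (n + 1) => deriv (fun ε => Y (i : ℕ) t ε) 0,
        deriv (fun ε => u t ε) 0))) 0 :=
    hEd.hasFDerivAt.comp_hasDerivAt 0 hpair
  have hzero : fderiv ℝ E p ((fun i : Fin (n + 1) => deriv (fun ε => Y (i : ℕ) t ε) 0,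
      deriv (fun ε => u t ε) 0)) = 0 := by
    have hconst : (fun ε => E (fun i : Fin (n + 1) => Y (i : ℕ) t ε, u t ε)) = fun _ => 0 := by
      funext ε; exact htraj t ε
    have := hcomp.deriv
    rw [hconst] at this
    simp at this
    exact this.symm
  -- expand the application by linearity
  have hlin : (∑ i : Fin (n + 1), deriv (fun ε => Y (i : ℕ) t ε) 0 * P i t)
      + deriv (fun ε => u t ε) 0 * Q t = 0 := by
    set δ : Fin (n + 1) → ℝ := fun i => deriv (fun ε => Y (i : ℕ) t ε) 0 with hδ
    set w : ℝ := deriv (fun ε => u t ε) 0 with hw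
    have hdecomp : ((δ, w) : (Fin (n + 1) → ℝ) × ℝ)
        = (∑ i : Fin (n + 1), δ i • ((Pi.single i 1, 0) : (Fin (n + 1) → ℝ) × ℝ))
          + w • (0, 1) := by
      rw [Prod.ext_iff]
      constructor
      · simp only [Prod.fst_add, Prod.fst_sum, Prod.smul_fst, smul_zero, add_zero]
        funext j
        simp [Finset.sum_apply, Pi.single_apply]
      · simp [Prod.snd_sum]
    have h0 := hzero
    rw [hdecomp, map_add, map_sum] at h0
    simp only [map_smul, smul_eq_mul] at h0
    calc (∑ i : Fin (n + 1), δ i * P i t) + w * Q t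
        = (∑ i : Fin (n + 1), δ i * fderiv ℝ E p (Pi.single i 1, 0))
            + w * fderiv ℝ E p (0, 1) := by
          rw [hQ t]
          congr 1
          exact Finset.sum_congr rfl fun i _ => by rw [hP i t]
      _ = 0 := h0
  -- Step 3: solve for the ν-component
  have hsum : (∑ i : Fin (n + 1), deriv (fun ε => Y (i : ℕ) t ε) 0 * P i t)
      = deriv (fun ε => Y ν t ε) 0 * P νf t
        + ∑ ι ∈ Finset.univ.erase νf, deriv (fun ε => Y (ι : ℕ) t ε) 0 * P ι t :=
    (Finset.add_sum_erase _ _ (Finset.mem_univ νf)).symm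
  rw [hsum] at hlin
  have hstep1 := step1 ν 0 (by omega) t
  simp only [Nat.zero_add] at hstep1
  rw [hstep1]
  have hPn := hPν t
  have key : deriv (fun ε => Y ν t ε) 0
      = (-(∑ ι ∈ Finset.univ.erase νf, deriv (fun ε => Y (ι : ℕ) t ε) 0 * P ι t)
          - deriv (fun ε => u t ε) 0 * Q t) / P νf t := by
    rw [eq_div_iff hPn]
    linarith
  rw [key, sub_div, neg_div, Finset.sum_div, sub_eq_add_neg]
  congr 1
  · congr 1
    exact Finset.sum_congr rfl fun ι _ => by ring
  · ring
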